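/- In the 3-dimensional algebra A of type 2A with basis a, b, c, the Killing form κ satisfies κ(p, p) = 17/16 for each basis vector p ∈ {a, b, c} and κ(p, q) = 1/4 for all distinct basis vectors p, q ∈ {a, b, c}. -/

import Mathlib

noncomputable section

/-- The underlying space of the dihedral algebra of type 2A: 3-dimensional over ℚ. -/
abbrev TwoA := Fin 3 → ℚ

/-- The basis vectors `a`, `b`, `c`. -/
def e (i : Fin 3) : TwoA := Pi.single i 1

/-- The index of the third basis vector, distinct from two distinct indices `i`, `j`. -/
def third (i j : Fin 3) : Fin 3 := ⟨(3 - i.val - j.val) % 3, Nat.mod_lt _ (by norm_num)⟩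

/-- Products of basis vectors: `p·p = p`, `p·q = (1/8)(p + q - r)`. -/
def mulB (i j : Fin 3) : TwoA :=
  if i = j then e i else (1 / 8 : ℚ) • (e i + e j - e (third i j))

/-- The bilinear multiplication of the type-2A algebra. -/
def mul2A (x y : TwoA) : TwoA :=
  ∑ i : Fin 3, ∑ j : Fin 3, (x i * y j) • mulB i j

/-- Left multiplication `ad(x) : y ↦ x·y` as a `ℚ`-linear map. -/
def ad (x : TwoA) : TwoA →ₗ[ℚ] TwoA where
  toFun y := mul2A x y
  map_add' y z := by
    simp only [mul2A, Pi.add_apply, mul_add, add_smul]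
    rw [← Finset.sum_add_distrib]
    refine Finset.sum_congr rfl fun i _ => ?_
    rw [← Finset.sum_add_distrib]
  map_smul' c y := by
    simp only [mul2A, Pi.smul_apply, smul_eq_mul, RingHom.id_apply, Finset.smul_sum]
    refine Finset.sum_congr rfl fun i _ => Finset.sum_congr rfl fun j _ => ?_
    rw [smul_smul]
    congr 1
    ring

/-- The Killing form `κ(x, y) = Trace(ad(x) ∘ ad(y))`. -/
def kappa (x y : TwoA) : ℚ := LinearMap.trace ℚ TwoA (ad x ∘ₗ ad y)

/-- The natural form: `ν(p, p) = 1`, `ν(p, q) = 1/8` on basis vectors. -/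
def nu (x y : TwoA) : ℚ :=
  ∑ i : Fin 3, ∑ j : Fin 3, x i * y j * (if i = j then 1 else 1 / 8)

lemma kappa_eq (x y : TwoA) : kappa x y = ∑ k : Fin 3, mul2A x (mul2A y (e k)) k := by
  rw [kappa, LinearMap.trace_eq_matrix_trace ℚ (Pi.basisFun ℚ (Fin 3))]
  rw [Matrix.trace]
  refine Finset.sum_congr rfl fun k _ => ?_
  simp [Matrix.diag, LinearMap.toMatrix_apply, ad, e]

lemma mul2A_e_left (i : Fin 3) (y : TwoA) :
    mul2A (e i) y = ∑ b : Fin 3, y b • mulB i b := by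
  rw [mul2A]
  rw [Fin.sum_univ_three]
  simp [e, Pi.single_apply, Fin.sum_univ_three]
  fin_cases i <;> simp

lemma kappa_e (i j : Fin 3) :
    kappa (e i) (e j) = ∑ k : Fin 3, ∑ b : Fin 3, mulB j k b * mulB i b k := by
  rw [kappa_eq]
  refine Finset.sum_congr rfl fun k _ => ?_
  rw [mul2A_e_left, mul2A_e_left]
  simp only [Finset.sum_apply, Pi.smul_apply, smul_eq_mul, e, Pi.single_apply]
  simp [ite_mul, Finset.sum_ite_eq]

/-- The Killing form of the type-2A algebra takes value `17/16` on each basis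
vector paired with itself and `1/4` on distinct basis vectors. -/
theorem kappa_values :
    (∀ i : Fin 3, kappa (e i) (e i) = 17 / 16) ∧
      (∀ i j : Fin 3, i ≠ j → kappa (e i) (e j) = 1 / 4) := by
  constructor
  · intro i
    fin_cases i <;>
      rw [kappa_e] <;>
      norm_num [mulB, e, third, Fin.sum_univ_three, Pi.single_apply, Fin.ext_iff, -Fin.val_eq_zero_iff]
  · intro i j h
    fin_cases i <;> fin_cases j <;> first
      | exact absurd rfl h
      | (rw [kappa_e]; norm_num [mulB, e, third, Fin.sum_univ_three, Pi.single_apply, Fin.ext_iff, -Fin.val_eq_zero_iff])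

end
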